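/- Let R be an s-unital ring, let p ∈ R be an algebraically infinite idempotent, and let q ∈ R be an idempotent with p·q = q·p = p. Then q is algebraically infinite. -/

import Mathlib

/-- A (possibly non-unital) ring `R` is s-unital if every element has both a left
and a right local unit. -/
def IsSUnital (R : Type*) [NonUnitalRing R] : Prop :=
  ∀ r : R, ∃ u v : R, u * r = r ∧ r * v = r

/-- An element `a` of a ring `R` is algebraically infinite if there is a nonzero `t ∈ R`
and matrices `α ∈ M_{2×1}(R)`, `β ∈ M_{1×2}(R)` with `diag(a, t) = α ⬝ (a) ⬝ β`,
where `(a)` is the `1×1` matrix with entry `a`. -/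
def AlgebraicallyInfinite {R : Type*} [NonUnitalRing R] (a : R) : Prop :=
  ∃ t : R, t ≠ 0 ∧ ∃ (α : Matrix (Fin 2) (Fin 1) R) (β : Matrix (Fin 1) (Fin 2) R),
    Matrix.diagonal ![a, t] = α * Matrix.of (fun _ _ : Fin 1 => a) * β

/-- Lemma 2.3(2): in an s-unital ring, if `p` is an algebraically infinite idempotent,
`q` is an idempotent, and `p ≤ q` (i.e. `p * q = q * p = p`), then `q` is
algebraically infinite. -/
theorem infinite_of_le {R : Type*} [NonUnitalRing R] (hR : IsSUnital R)
    (p q : R) (hp : p * p = p) (hpinf : AlgebraicallyInfinite p)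
    (hq : q * q = q) (hpq : p * q = p) (hqp : q * p = p) :
    AlgebraicallyInfinite q := by
  obtain ⟨t, ht, α, β, h⟩ := hpinf
  have h00 : α 0 0 * p * β 0 0 = p := by
    have := congrFun (congrFun h 0) 0
    simpa [Matrix.mul_apply, Matrix.diagonal] using this.symm
  have h01 : α 0 0 * p * β 0 1 = 0 := by
    have := congrFun (congrFun h 0) 1
    simpa [Matrix.mul_apply, Matrix.diagonal] using this.symm
  have h10 : α 1 0 * p * β 0 0 = 0 := by
    have := congrFun (congrFun h 1) 0
    simpa [Matrix.mul_apply, Matrix.diagonal] using this.symm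
  have h11 : α 1 0 * p * β 0 1 = t := by
    have := congrFun (congrFun h 1) 1
    simpa [Matrix.mul_apply, Matrix.diagonal] using this.symm
  set e : R := q - p with he
  refine ⟨t, ht, Matrix.of ![![α 0 0 * p + e], ![α 1 0 * p]], Matrix.of ![![p * β 0 0 + e, p * β 0 1]], ?_⟩
  ext i j
  have hpe : p * e = 0 := by simp [he, mul_sub, hpq, hp]
  have hep : e * p = 0 := by simp [he, sub_mul, hqp, hp]
  have heq : e * q = e := by simp [he, sub_mul, hq, hpq]
  have hqe : q * e = e := by simp [he, mul_sub, hq, hqp]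
  fin_cases i <;> fin_cases j <;>
    simp only [Matrix.mul_apply, Fin.sum_univ_succ, Fin.sum_univ_zero, Matrix.diagonal,
      Matrix.of_apply, Matrix.cons_val', Matrix.cons_val_zero, Matrix.cons_val_one,
      Matrix.head_cons, Matrix.empty_val', Matrix.cons_val_fin_one, Matrix.head_fin_const,
      add_zero, Fin.isValue]
  · -- (0,0): q = (α00 p + e) q (p β00 + e)
    show q = (α 0 0 * p + e) * q * (p * β 0 0 + e)
    have h1 : (α 0 0 * p + e) * q = α 0 0 * p + e := by
      rw [add_mul, heq, mul_assoc, hpq]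
    rw [h1, add_mul, mul_add, mul_add]
    have e1 : α 0 0 * p * (p * β 0 0) = p := by
      rw [← mul_assoc, mul_assoc (α 0 0) p p, hp, h00]
    have e2 : e * (p * β 0 0) = 0 := by rw [← mul_assoc, hep, zero_mul]
    have he2 : e * e = e := by
      simp [he, sub_mul, mul_sub, hq, hpq, hqp, hp]
    have e3 : α 0 0 * p * e = 0 := by rw [mul_assoc, hpe, mul_zero]
    rw [e1, e2, he2, e3]
    simp [he]
  · show (0 : R) = (α 0 0 * p + e) * q * (p * β 0 1)
    have h1 : (α 0 0 * p + e) * q = α 0 0 * p + e := by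
      rw [add_mul, heq, mul_assoc, hpq]
    rw [h1, add_mul]
    have : α 0 0 * p * (p * β 0 1) = 0 := by
      rw [← mul_assoc, mul_assoc (α 0 0) p p, hp, h01]
    rw [this]
    have : e * (p * β 0 1) = 0 := by rw [← mul_assoc, hep, zero_mul]
    rw [this, add_zero]
  · show (0 : R) = α 1 0 * p * q * (p * β 0 0 + e)
    rw [mul_assoc (α 1 0) p q, hpq, mul_add]
    have h1 : α 1 0 * p * (p * β 0 0) = 0 := by
      rw [← mul_assoc, mul_assoc (α 1 0) p p, hp, h10]
    have h2 : α 1 0 * p * e = 0 := by rw [mul_assoc, hpe, mul_zero]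
    rw [h1, h2, add_zero]
  · show t = α 1 0 * p * q * (p * β 0 1)
    rw [mul_assoc (α 1 0) p q, hpq, ← mul_assoc, mul_assoc (α 1 0) p p, hp, h11]
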